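/- With the same setup, if d = n_p + n_q = n + l with 0 ≤ l ≤ n − 1, then Σ_{i=1}^{n_q} |c_{n_p+i,n}| ≤ 2 Σ_{i=n*}^∞ |c_i|, where n* = min{n_p + 1, n − l}. -/

import Mathlib

private lemma two_mul_le_aux (n a b : ℕ) (h : a + 1 ≤ b) :
    2 * a * n + 2 * n ≤ 2 * b * n := by
  have := Nat.mul_le_mul_right n (show 2 * (a + 1) ≤ 2 * b by omega)
  calc 2 * a * n + 2 * n = 2 * (a + 1) * n := by ring
    _ ≤ 2 * b * n := this

private lemma two_n_le_aux (n j : ℕ) : 2 * n ≤ 2 * (j + 1) * n := by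
  calc 2 * n = 2 * 1 * n := by ring
    _ ≤ 2 * (j + 1) * n := Nat.mul_le_mul_right n (by omega)

private lemma nat_sub_cancel_aux (A A' B B' : ℕ) (hB : B ≤ A) (hB' : B' ≤ A')
    (h : A - B = A' - B') : A + B' = A' + B := by omega

private lemma nat_sub_lt_aux (A A' B : ℕ) (hB : B ≤ A) (h : A < A') :
    A - B < A' - B := by omega

/-- Sum over a finset-indexed double family with jointly injective index map,
all indices at least `N`, is bounded by the tail sum. -/
private lemma sum_tsum_abs_le (c : ℕ → ℝ) (hsum : Summable fun j => |c j|) (s : Finset ℕ)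
    (φ : ℕ → ℕ → ℕ)
    (hinj : ∀ m ∈ s, ∀ m' ∈ s, ∀ j j' : ℕ, φ m j = φ m' j' → m = m' ∧ j = j')
    (N : ℕ) (hN : ∀ m ∈ s, ∀ j : ℕ, N ≤ φ m j) :
    (∑ m ∈ s, ∑' j : ℕ, |c (φ m j)|) ≤ ∑' i : ℕ, |c (N + i)| := by
  classical
  have hΦ : Function.Injective (fun p : ↥s × ℕ => φ p.1 p.2) := by
    rintro ⟨⟨m, hm⟩, j⟩ ⟨⟨m', hm'⟩, j'⟩ h
    obtain ⟨h1, h2⟩ := hinj m hm m' hm' j j' h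
    simp only [Prod.mk.injEq, Subtype.mk.injEq]
    exact ⟨h1, h2⟩
  have hS : Summable fun p : ↥s × ℕ => |c (φ p.1 p.2)| := hsum.comp_injective hΦ
  have hrow : ∀ m : ↥s, Summable fun j : ℕ => |c (φ (m : ℕ) j)| := by
    rintro ⟨m, hm⟩
    exact hsum.comp_injective (fun a b h => (hinj m hm m hm a b h).2)
  have hrw : (∑ m ∈ s, ∑' j : ℕ, |c (φ m j)|) = ∑' p : ↥s × ℕ, |c (φ p.1 p.2)| := by
    rw [← Finset.tsum_subtype s (fun m => ∑' j : ℕ, |c (φ m j)|)]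
    exact (Summable.tsum_prod' hS hrow).symm
  rw [hrw]
  have hgsum : Summable fun k : ℕ => |c (N + k)| :=
    hsum.comp_injective fun a b h => by omega
  have hinj2 : Function.Injective (fun p : ↥s × ℕ => φ p.1 p.2 - N) := by
    rintro ⟨⟨m, hm⟩, j⟩ ⟨⟨m', hm'⟩, j'⟩ h
    simp only at h
    have h1 := hN m hm j
    have h2 := hN m' hm' j'
    have he : φ m j = φ m' j' := by omega
    obtain ⟨e1, e2⟩ := hinj m hm m' hm' j j' he
    simp only [Prod.mk.injEq, Subtype.mk.injEq]
    exact ⟨e1, e2⟩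
  have hb := tsum_comp_le_tsum_of_inj hgsum (fun k => abs_nonneg _) hinj2
  refine le_trans (le_of_eq ?_) hb
  apply tsum_congr
  rintro ⟨⟨m, hm⟩, j⟩
  simp only [Function.comp_apply]
  rw [Nat.add_sub_cancel' (hN m hm j)]

/-- Pointwise bound on an aliased coefficient. -/
private lemma pointwise_bound (c c' : ℕ → ℝ) (n : ℕ) (hn : 1 ≤ n)
    (hsum : Summable fun j => |c j|) (M : ℕ) (hM2 : M < 2 * n)
    (heq : c' M = c M + ∑' j : ℕ, (-1 : ℝ) ^ (j + 1) *
        (c (2 * (j + 1) * n - M) + c (2 * (j + 1) * n + M))) :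
    |c' M| ≤ (∑' j : ℕ, |c (2 * j * n + M)|)
        + ∑' j : ℕ, |c (2 * (j + 1) * n - M)| := by
  have inj1 : Function.Injective fun j : ℕ => 2 * (j + 1) * n - M := by
    have mono : StrictMono fun j : ℕ => 2 * (j + 1) * n - M := by
      intro a b hab
      have h1 := two_mul_le_aux n (a + 1) (b + 1) (by omega)
      have h2 : M ≤ 2 * (a + 1) * n := le_trans (le_of_lt hM2) (two_n_le_aux n a)
      exact nat_sub_lt_aux _ _ _ h2 (by linarith)
    exact mono.injective
  have inj2 : Function.Injective fun j : ℕ => 2 * (j + 1) * n + M := by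
    have mono : StrictMono fun j : ℕ => 2 * (j + 1) * n + M := by
      intro a b hab
      have h1 := two_mul_le_aux n (a + 1) (b + 1) (by omega)
      have hn' : (1 : ℕ) ≤ n := hn
      have : 2 * (a + 1) * n < 2 * (b + 1) * n := by linarith
      exact Nat.add_lt_add_right this M
    exact mono.injective
  have inj0 : Function.Injective fun j : ℕ => 2 * j * n + M := by
    have mono : StrictMono fun j : ℕ => 2 * j * n + M := by
      intro a b hab
      have h1 := two_mul_le_aux n a b (by omega)
      have hn' : (1 : ℕ) ≤ n := hn
      have : 2 * a * n < 2 * b * n := by linarith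
      exact Nat.add_lt_add_right this M
    exact mono.injective
  have h1 : Summable fun j : ℕ => |c (2 * (j + 1) * n - M)| := hsum.comp_injective inj1
  have h2 : Summable fun j : ℕ => |c (2 * (j + 1) * n + M)| := hsum.comp_injective inj2
  have h0 : Summable fun j : ℕ => |c (2 * j * n + M)| := hsum.comp_injective inj0
  set f : ℕ → ℝ := fun j => (-1 : ℝ) ^ (j + 1) *
      (c (2 * (j + 1) * n - M) + c (2 * (j + 1) * n + M)) with hfdef
  have hfle : ∀ j : ℕ, ‖f j‖ ≤ |c (2 * (j + 1) * n - M)| + |c (2 * (j + 1) * n + M)| := by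
    intro j
    rw [hfdef]
    simp only [Real.norm_eq_abs, abs_mul, abs_pow, abs_neg, abs_one, one_pow, one_mul]
    exact abs_add_le _ _
  have hfnorm : Summable fun j => ‖f j‖ :=
    Summable.of_nonneg_of_le (fun j => norm_nonneg _) hfle (h1.add h2)
  calc |c' M| = |c M + ∑' j : ℕ, f j| := by rw [heq]
    _ ≤ |c M| + ‖∑' j : ℕ, f j‖ := by
        rw [Real.norm_eq_abs]; exact abs_add_le _ _
    _ ≤ |c M| + ∑' j : ℕ, ‖f j‖ := by
        gcongr; exact norm_tsum_le_tsum_norm hfnorm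
    _ ≤ |c M| + ∑' j : ℕ, (|c (2 * (j + 1) * n - M)| + |c (2 * (j + 1) * n + M)|) := by
        exact add_le_add_right (Summable.tsum_le_tsum hfle hfnorm (h1.add h2)) _
    _ = |c M| + ((∑' j : ℕ, |c (2 * (j + 1) * n - M)|)
          + ∑' j : ℕ, |c (2 * (j + 1) * n + M)|) := by
        rw [Summable.tsum_add h1 h2]
    _ = (∑' j : ℕ, |c (2 * j * n + M)|) + ∑' j : ℕ, |c (2 * (j + 1) * n - M)| := by
        rw [Summable.tsum_eq_zero_add h0]
        simp only [Nat.mul_zero, Nat.zero_mul, Nat.zero_add, mul_zero, zero_mul, zero_add]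
        ring

/-- Bound on the aliased coefficient sum, case `d = n_p + n_q = n + l`,
`0 ≤ l ≤ n - 1`: `Σ_{i=1}^{n_q} |c_{n_p+i,n}| ≤ 2 Σ_{i=n*}^∞ |c_i|` with
`n* = min{n_p + 1, n - l}`. -/
theorem aliased_coeff_sum_bound_high (c c' : ℕ → ℝ) (n : ℕ) (hn : 1 ≤ n)
    (hsum : Summable fun j => |c j|)
    (halias : ∀ m : ℕ, m < 2 * n →
      c' m = c m + ∑' j : ℕ, (-1 : ℝ) ^ (j + 1) *
        (c (2 * (j + 1) * n - m) + c (2 * (j + 1) * n + m)))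
    (np nq : ℕ) (hnp : 1 ≤ np) (hnq : 1 ≤ nq) (d : ℕ) (hdef : d = np + nq)
    (l : ℕ) (hln : l ≤ n - 1) (hd : d = n + l) :
    (∑ i ∈ Finset.Icc 1 nq, |c' (np + i)|) ≤
      2 * ∑' i : ℕ, |c (min (np + 1) (n - l) + i)| := by
  have hln' : l + 1 ≤ n := by omega
  have hdnq : np + nq = n + l := by omega
  set N := min (np + 1) (n - l) with hNdef
  have hpoint : ∀ m ∈ Finset.Icc 1 nq,
      |c' (np + m)| ≤ (∑' j : ℕ, |c (2 * j * n + (np + m))|)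
        + ∑' j : ℕ, |c (2 * (j + 1) * n - (np + m))| := by
    intro m hm
    rw [Finset.mem_Icc] at hm
    exact pointwise_bound c c' n hn hsum (np + m) (by omega) (halias (np + m) (by omega))
  refine le_trans (Finset.sum_le_sum hpoint) ?_
  rw [Finset.sum_add_distrib, two_mul]
  gcongr
  · -- Σ_m Σ_j |c (2jn + np + m)| ≤ tail
    apply sum_tsum_abs_le c hsum _ (fun m j => 2 * j * n + (np + m))
    · intro m hm m' hm' j j' h
      rw [Finset.mem_Icc] at hm hm'
      obtain ⟨hm1, hm2⟩ := hm
      obtain ⟨hm1', hm2'⟩ := hm'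
      rcases lt_trichotomy j j' with hlt | heq | hgt
      · exfalso
        have h1 := two_mul_le_aux n j j' (by omega)
        linarith
      · subst heq
        have := Nat.add_left_cancel h
        omega
      · exfalso
        have h1 := two_mul_le_aux n j' j (by omega)
        linarith
    · intro m hm j
      rw [Finset.mem_Icc] at hm
      have hNle : N ≤ np + 1 := min_le_left _ _
      have : np + 1 ≤ 2 * j * n + (np + m) := by omega
      omega
  · -- Σ_m Σ_j |c (2(j+1)n − (np + m))| ≤ tail
    apply sum_tsum_abs_le c hsum _ (fun m j => 2 * (j + 1) * n - (np + m))
    · intro m hm m' hm' j j' h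
      rw [Finset.mem_Icc] at hm hm'
      obtain ⟨hm1, hm2⟩ := hm
      obtain ⟨hm1', hm2'⟩ := hm'
      have hb : np + m ≤ 2 * (j + 1) * n := by
        have := two_n_le_aux n j
        linarith
      have hb' : np + m' ≤ 2 * (j' + 1) * n := by
        have := two_n_le_aux n j'
        linarith
      have he := nat_sub_cancel_aux _ _ _ _ hb hb' h
      rcases lt_trichotomy j j' with hlt | heq | hgt
      · exfalso
        have h1 := two_mul_le_aux n (j + 1) (j' + 1) (by omega)
        linarith
      · subst heq
        have := Nat.add_left_cancel he
        omega
      · exfalso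
        have h1 := two_mul_le_aux n (j' + 1) (j + 1) (by omega)
        linarith
    · intro m hm j
      rw [Finset.mem_Icc] at hm
      have hNle : N ≤ n - l := min_le_right _ _
      have hb : 2 * n ≤ 2 * (j + 1) * n := two_n_le_aux n j
      have hmb : np + m ≤ n + l := by omega
      have : 2 * n - (n + l) ≤ 2 * (j + 1) * n - (np + m) :=
        tsub_le_tsub hb hmb
      omega
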